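/- Let w^f and w^g be C² solutions on [0,L]×[0,T] of w_{tt} = w_{xx} + q(x) w with zero initial data, boundary conditions w^f(0,t) = f(t), w^f(L,t) = 0 (resp. g for w^g), and let y^f(t) = w^f_x(0,t), y^g(t) = w^g_x(0,t). Define H(s,t) = ∫₀ᴸ w^f(x,t) w^g(x,s) dx. Then H_{tt}(s,t) − H_{ss}(s,t) = f(t) y^g(s) − y^f(t) g(s). -/

import Mathlib

open Set intervalIntegral

/-- Partial derivative of a two-variable function in direction `v`. -/
noncomputable def pD (v : ℝ × ℝ) (F : ℝ → ℝ → ℝ) : ℝ → ℝ → ℝ :=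
  fun x t => fderiv ℝ (Function.uncurry F) (x, t) v

lemma contDiff_one_pD {F : ℝ → ℝ → ℝ} (h : ContDiff ℝ 2 (Function.uncurry F))
    (v : ℝ × ℝ) : ContDiff ℝ 1 (Function.uncurry (pD v F)) :=
  (h.fderiv_right (by norm_num)).clm_apply contDiff_const

lemma cont_pD {F : ℝ → ℝ → ℝ} (h : ContDiff ℝ 1 (Function.uncurry F))
    (v : ℝ × ℝ) : Continuous (Function.uncurry (pD v F)) :=
  (((h.fderiv_right (by norm_num)).clm_apply contDiff_const :
    ContDiff ℝ 0 (Function.uncurry (pD v F)))).continuous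

lemma hasDerivAt_pD2 {F : ℝ → ℝ → ℝ} (h : Differentiable ℝ (Function.uncurry F)) (x t : ℝ) :
    HasDerivAt (fun τ => F x τ) (pD (0, 1) F x t) t := by
  have h1 : HasDerivAt (fun τ : ℝ => (x, τ)) ((0 : ℝ), (1 : ℝ)) t :=
    (hasDerivAt_const _ _).prodMk (hasDerivAt_id _)
  exact (h (x, t)).hasFDerivAt.comp_hasDerivAt t h1

lemma hasDerivAt_pD1 {F : ℝ → ℝ → ℝ} (h : Differentiable ℝ (Function.uncurry F)) (x t : ℝ) :
    HasDerivAt (fun y => F y t) (pD (1, 0) F x t) x := by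
  have h1 : HasDerivAt (fun y : ℝ => (y, t)) ((1 : ℝ), (0 : ℝ)) x :=
    (hasDerivAt_id _).prodMk (hasDerivAt_const _ _)
  exact (h (x, t)).hasFDerivAt.comp_hasDerivAt x h1

/-- Differentiation under the interval integral sign, for continuous data. -/
lemma param_hasDerivAt {F F' : ℝ → ℝ → ℝ} {a b : ℝ}
    (hF : Continuous (Function.uncurry F)) (hF' : Continuous (Function.uncurry F'))
    (hd : ∀ x t, HasDerivAt (fun τ => F x τ) (F' x t) t) (t₀ : ℝ) :
    HasDerivAt (fun t => ∫ x in a..b, F x t) (∫ x in a..b, F' x t₀) t₀ := by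
  obtain ⟨C, hC⟩ := (isCompact_uIcc (a := a) (b := b)).prod
    (isCompact_Icc (a := t₀ - 1) (b := t₀ + 1)) |>.exists_bound_of_continuousOn
    hF'.continuousOn
  have h := intervalIntegral.hasDerivAt_integral_of_dominated_loc_of_deriv_le
    (F := fun t x => F x t) (F' := fun t x => F' x t) (bound := fun _ => C)
    (μ := MeasureTheory.volume) (a := a) (b := b) (x₀ := t₀) (s := Metric.ball t₀ 1) (Metric.ball_mem_nhds _ one_pos)
    (Filter.Eventually.of_forall fun t =>
      (hF.comp (continuous_id.prodMk continuous_const)).aestronglyMeasurable)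
    ((hF.comp (continuous_id.prodMk continuous_const)).intervalIntegrable a b)
    (hF'.comp (continuous_id.prodMk continuous_const)).aestronglyMeasurable
    (MeasureTheory.ae_of_all _ fun x hx t ht => by
      exact hC (x, t) ⟨uIoc_subset_uIcc hx,
        ⟨by linarith [abs_lt.1 (by simpa [Real.dist_eq] using ht) |>.1],
         by linarith [abs_lt.1 (by simpa [Real.dist_eq] using ht) |>.2]⟩⟩)
    intervalIntegrable_const
    (MeasureTheory.ae_of_all _ fun x _ t _ => hd x t)
  exact h.2

/-- Blagoveshchenskii's identity for the wave equation with potential: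
`H(s,t) = ∫₀ᴸ w^f(x,t) w^g(x,s) dx` satisfies
`H_{tt} - H_{ss} = f(t) y^g(s) - y^f(t) g(s)`. -/
theorem blagoveshchenskii_wave
    (L T : ℝ) (hL : 0 < L) (hT : 0 < T)
    (q f g yf yg : ℝ → ℝ) (hq : ContinuousOn q (Icc 0 L))
    (wf wg : ℝ → ℝ → ℝ)
    (hwf : ContDiff ℝ 2 (Function.uncurry wf))
    (hwg : ContDiff ℝ 2 (Function.uncurry wg))
    (heqf : ∀ x ∈ Icc 0 L, ∀ t ∈ Icc 0 T,
      deriv (fun τ' => deriv (fun τ => wf x τ) τ') t =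
        deriv (fun y => deriv (fun z => wf z t) y) x + q x * wf x t)
    (heqg : ∀ x ∈ Icc 0 L, ∀ t ∈ Icc 0 T,
      deriv (fun τ' => deriv (fun τ => wg x τ) τ') t =
        deriv (fun y => deriv (fun z => wg z t) y) x + q x * wg x t)
    (hinitf : ∀ x ∈ Icc 0 L, wf x 0 = 0 ∧ deriv (fun τ => wf x τ) 0 = 0)
    (hinitg : ∀ x ∈ Icc 0 L, wg x 0 = 0 ∧ deriv (fun τ => wg x τ) 0 = 0)
    (hbdf : ∀ t ∈ Icc 0 T, wf 0 t = f t ∧ wf L t = 0)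
    (hbdg : ∀ t ∈ Icc 0 T, wg 0 t = g t ∧ wg L t = 0)
    (hyf : ∀ t ∈ Icc 0 T, yf t = deriv (fun y => wf y t) 0)
    (hyg : ∀ t ∈ Icc 0 T, yg t = deriv (fun y => wg y t) 0)
    (H : ℝ → ℝ → ℝ) (hH : ∀ s t, H s t = ∫ x in (0:ℝ)..L, wf x t * wg x s) :
    ∀ s ∈ Icc (0:ℝ) T, ∀ t ∈ Icc (0:ℝ) T,
      deriv (fun τ' => deriv (fun τ => H s τ) τ') t
        - deriv (fun σ' => deriv (fun σ => H σ t) σ') s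
        = f t * yg s - yf t * g s := by
  intro s hs t ht
  -- basic regularity facts
  have hwf1 : ContDiff ℝ 1 (Function.uncurry wf) := hwf.of_le (by norm_num)
  have hwg1 : ContDiff ℝ 1 (Function.uncurry wg) := hwg.of_le (by norm_num)
  have cwf : Continuous (Function.uncurry wf) := hwf.continuous
  have cwg : Continuous (Function.uncurry wg) := hwg.continuous
  have dwf : Differentiable ℝ (Function.uncurry wf) := hwf1.differentiable one_ne_zero
  have dwg : Differentiable ℝ (Function.uncurry wg) := hwg1.differentiable one_ne_zero
  have hwfT1 : ContDiff ℝ 1 (Function.uncurry (pD (0,1) wf)) := contDiff_one_pD hwf _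
  have hwgT1 : ContDiff ℝ 1 (Function.uncurry (pD (0,1) wg)) := contDiff_one_pD hwg _
  have hwfX1 : ContDiff ℝ 1 (Function.uncurry (pD (1,0) wf)) := contDiff_one_pD hwf _
  have hwgX1 : ContDiff ℝ 1 (Function.uncurry (pD (1,0) wg)) := contDiff_one_pD hwg _
  have dwfT : Differentiable ℝ (Function.uncurry (pD (0,1) wf)) := hwfT1.differentiable one_ne_zero
  have dwgT : Differentiable ℝ (Function.uncurry (pD (0,1) wg)) := hwgT1.differentiable one_ne_zero
  have dwfX : Differentiable ℝ (Function.uncurry (pD (1,0) wf)) := hwfX1.differentiable one_ne_zero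
  have dwgX : Differentiable ℝ (Function.uncurry (pD (1,0) wg)) := hwgX1.differentiable one_ne_zero
  have cwfT : Continuous (Function.uncurry (pD (0,1) wf)) := hwfT1.continuous
  have cwgT : Continuous (Function.uncurry (pD (0,1) wg)) := hwgT1.continuous
  have cwfTT : Continuous (Function.uncurry (pD (0,1) (pD (0,1) wf))) := cont_pD hwfT1 _
  have cwgTT : Continuous (Function.uncurry (pD (0,1) (pD (0,1) wg))) := cont_pD hwgT1 _
  have cwfXX : Continuous (Function.uncurry (pD (1,0) (pD (1,0) wf))) := cont_pD hwfX1 _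
  have cwgXX : Continuous (Function.uncurry (pD (1,0) (pD (1,0) wg))) := cont_pD hwgX1 _
  have cgs : Continuous fun x => wg x s := cwg.comp (continuous_id.prodMk continuous_const)
  have cft : Continuous fun x => wf x t := cwf.comp (continuous_id.prodMk continuous_const)
  -- the PDE in terms of pD
  have pdef : ∀ F : ℝ → ℝ → ℝ, ContDiff ℝ 2 (Function.uncurry F) →
      (∀ x ∈ Icc 0 L, ∀ u ∈ Icc 0 T,
        deriv (fun τ' => deriv (fun τ => F x τ) τ') u =
          deriv (fun y => deriv (fun z => F z u) y) x + q x * F x u) →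
      ∀ x ∈ Icc (0:ℝ) L, ∀ u ∈ Icc (0:ℝ) T,
        pD (0,1) (pD (0,1) F) x u = pD (1,0) (pD (1,0) F) x u + q x * F x u := by
    intro F hF heq x hx u hu
    have dF : Differentiable ℝ (Function.uncurry F) :=
      (hF.of_le one_le_two).differentiable one_ne_zero
    have dFT : Differentiable ℝ (Function.uncurry (pD (0,1) F)) :=
      (contDiff_one_pD hF _).differentiable one_ne_zero
    have dFX : Differentiable ℝ (Function.uncurry (pD (1,0) F)) :=
      (contDiff_one_pD hF _).differentiable one_ne_zero
    have h1 : (fun τ => deriv (fun τ' => F x τ') τ) = fun τ => pD (0,1) F x τ :=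
      funext fun τ => (hasDerivAt_pD2 dF x τ).deriv
    have h2 : (fun y => deriv (fun z => F z u) y) = fun y => pD (1,0) F y u :=
      funext fun y => (hasDerivAt_pD1 dF y u).deriv
    have := heq x hx u hu
    rw [show (fun τ' => deriv (fun τ => F x τ) τ') = fun τ => pD (0,1) F x τ from h1,
      h2, (hasDerivAt_pD2 dFT x u).deriv, (hasDerivAt_pD1 dFX x u).deriv] at this
    exact this
  -- second t-derivative of H
  have hHt : deriv (fun τ => H s τ) = fun τ => ∫ x in (0:ℝ)..L, pD (0,1) wf x τ * wg x s := by
    funext τ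
    rw [show (fun τ => H s τ) = fun τ => ∫ x in (0:ℝ)..L, wf x τ * wg x s from
      funext fun τ => hH s τ]
    exact (param_hasDerivAt (F := fun x τ => wf x τ * wg x s)
      (F' := fun x τ => pD (0,1) wf x τ * wg x s)
      (cwf.mul (cgs.comp continuous_fst)) (cwfT.mul (cgs.comp continuous_fst))
      (fun x τ => (hasDerivAt_pD2 dwf x τ).mul_const _) τ).deriv
  have hHtt : deriv (fun τ' => deriv (fun τ => H s τ) τ') t =
      ∫ x in (0:ℝ)..L, pD (0,1) (pD (0,1) wf) x t * wg x s := by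
    simp only [hHt]
    exact (param_hasDerivAt (F := fun x τ => pD (0,1) wf x τ * wg x s)
      (F' := fun x τ => pD (0,1) (pD (0,1) wf) x τ * wg x s)
      (cwfT.mul (cgs.comp continuous_fst)) (cwfTT.mul (cgs.comp continuous_fst))
      (fun x τ => (hasDerivAt_pD2 dwfT x τ).mul_const _) t).deriv
  -- second s-derivative of H
  have hHs : deriv (fun σ => H σ t) = fun σ => ∫ x in (0:ℝ)..L, wf x t * pD (0,1) wg x σ := by
    funext σ
    rw [show (fun σ => H σ t) = fun σ => ∫ x in (0:ℝ)..L, wf x t * wg x σ from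
      funext fun σ => hH σ t]
    exact (param_hasDerivAt (F := fun x σ => wf x t * wg x σ)
      (F' := fun x σ => wf x t * pD (0,1) wg x σ)
      ((cft.comp continuous_fst).mul cwg) ((cft.comp continuous_fst).mul cwgT)
      (fun x σ => (hasDerivAt_pD2 dwg x σ).const_mul _) σ).deriv
  have hHss : deriv (fun σ' => deriv (fun σ => H σ t) σ') s =
      ∫ x in (0:ℝ)..L, wf x t * pD (0,1) (pD (0,1) wg) x s := by
    simp only [hHs]
    exact (param_hasDerivAt (F := fun x σ => wf x t * pD (0,1) wg x σ)
      (F' := fun x σ => wf x t * pD (0,1) (pD (0,1) wg) x σ)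
      ((cft.comp continuous_fst).mul cwgT) ((cft.comp continuous_fst).mul cwgTT)
      (fun x σ => (hasDerivAt_pD2 dwgT x σ).const_mul _) s).deriv
  rw [hHtt, hHss]
  -- combine the two integrals
  have int1 : IntervalIntegrable (fun x => pD (0,1) (pD (0,1) wf) x t * wg x s)
      MeasureTheory.volume 0 L :=
    ((cwfTT.comp (continuous_id.prodMk continuous_const)).mul cgs).intervalIntegrable _ _
  have int2 : IntervalIntegrable (fun x => wf x t * pD (0,1) (pD (0,1) wg) x s)
      MeasureTheory.volume 0 L :=
    (cft.mul (cwgTT.comp (continuous_id.prodMk continuous_const))).intervalIntegrable _ _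
  rw [← intervalIntegral.integral_sub int1 int2]
  have hcong : (∫ x in (0:ℝ)..L,
      (pD (0,1) (pD (0,1) wf) x t * wg x s - wf x t * pD (0,1) (pD (0,1) wg) x s)) =
      ∫ x in (0:ℝ)..L,
      (pD (1,0) (pD (1,0) wf) x t * wg x s - wf x t * pD (1,0) (pD (1,0) wg) x s) := by
    apply intervalIntegral.integral_congr
    intro x hx
    have hx' : x ∈ Icc (0:ℝ) L := by rwa [uIcc_of_le hL.le] at hx
    beta_reduce
    rw [pdef wf hwf heqf x hx' t ht, pdef wg hwg heqg x hx' s hs]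
    ring
  rw [hcong]
  -- fundamental theorem of calculus (integration by parts)
  have hFTC : (∫ x in (0:ℝ)..L,
      (pD (1,0) (pD (1,0) wf) x t * wg x s - wf x t * pD (1,0) (pD (1,0) wg) x s)) =
      (pD (1,0) wf L t * wg L s - wf L t * pD (1,0) wg L s) -
      (pD (1,0) wf 0 t * wg 0 s - wf 0 t * pD (1,0) wg 0 s) := by
    apply intervalIntegral.integral_eq_sub_of_hasDerivAt
    · intro x hx
      have hA : HasDerivAt (fun y => pD (1,0) wf y t) (pD (1,0) (pD (1,0) wf) x t) x :=
        hasDerivAt_pD1 dwfX x t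
      have hB : HasDerivAt (fun y => wg y s) (pD (1,0) wg x s) x := hasDerivAt_pD1 dwg x s
      have hC : HasDerivAt (fun y => wf y t) (pD (1,0) wf x t) x := hasDerivAt_pD1 dwf x t
      have hD : HasDerivAt (fun y => pD (1,0) wg y s) (pD (1,0) (pD (1,0) wg) x s) x :=
        hasDerivAt_pD1 dwgX x s
      have := (hA.mul hB).sub (hC.mul hD)
      convert this using 1
      · rfl
      ring
    · exact (((cwfXX.comp (continuous_id.prodMk continuous_const)).mul cgs).sub
        (cft.mul (cwgXX.comp (continuous_id.prodMk continuous_const)))).intervalIntegrable _ _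
  rw [hFTC]
  -- boundary values
  have hfL : wf L t = 0 := (hbdf t ht).2
  have hgL : wg L s = 0 := (hbdg s hs).2
  have hf0 : wf 0 t = f t := (hbdf t ht).1
  have hg0 : wg 0 s = g s := (hbdg s hs).1
  have hyf' : yf t = pD (1,0) wf 0 t := by
    rw [hyf t ht, (hasDerivAt_pD1 dwf 0 t).deriv]
  have hyg' : yg s = pD (1,0) wg 0 s := by
    rw [hyg s hs, (hasDerivAt_pD1 dwg 0 s).deriv]
  rw [hfL, hgL, hf0, hg0, hyf', hyg']
  ring
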